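/- Let n ∈ ℝ³ \ {0} and let J_n be as above. Then J_n commutes with the operator v ↦ i(n × v) on {v ∈ ℂ³ : n · v = 0}; in particular, if b is a positive (resp. negative) Beltrami vector at n, then exp(−Ω t J_n) b is again a positive (resp. negative) Beltrami vector at n for all t, Ω ∈ ℝ. -/

import Mathlib

open scoped Classical

noncomputable section

abbrev V3 := Fin 3 → ℝ
abbrev C3 := Fin 3 → ℂ

/-- Canonical inclusion of real vectors into `ℂ³`. -/
def toC (v : V3) : C3 := fun i => (v i : ℂ)

/-- Real dot product. -/
def dotR (u v : V3) : ℝ := ∑ i, u i * v i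

/-- ℂ-bilinear dot product on `ℂ³`. -/
def dotC (u v : C3) : ℂ := ∑ i, u i * v i

/-- Euclidean norm of a vector of `ℝ³`. -/
def norm3 (v : V3) : ℝ := Real.sqrt (dotR v v)

/-- Cross product on `ℝ³`. -/
def crossR (u v : V3) : V3 :=
  ![u 1 * v 2 - u 2 * v 1, u 2 * v 0 - u 0 * v 2, u 0 * v 1 - u 1 * v 0]

/-- ℂ-bilinear cross product on `ℂ³`. -/
def crossC (u v : C3) : C3 :=
  ![u 1 * v 2 - u 2 * v 1, u 2 * v 0 - u 0 * v 2, u 0 * v 1 - u 1 * v 0]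

/-- Orthogonal projection of `ℂ³` onto `{v : m · v = 0}` (for a real frequency `m`). -/
def projC (m : V3) (v : C3) : C3 :=
  v - (dotC (toC m) v / ((dotR m m : ℝ) : ℂ)) • toC m

/-- Rodrigues rotation formula (unit axis `a`, cosine `c`, sine `s`). -/
def rodriguesR (a : V3) (c s : ℝ) (v : V3) : V3 :=
  c • v + s • crossR a v + ((1 - c) * dotR a v) • a

/-- Complexified Rodrigues rotation formula; since the coefficients are real this acts on the
real and imaginary parts separately. -/
def rodriguesC (a : C3) (c s : ℂ) (v : C3) : C3 :=
  c • v + s • crossC a v + ((1 - c) * dotC a v) • a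

/-- The rotation `R_{ω₁ ↦ ω₂}` around the axis `ω₁ × ω₂` by the angle `θ ∈ (0,π)` with
`cos θ = ω₁ · ω₂` (for unit vectors `ω₁ ≠ ±ω₂`, so that `sin θ = |ω₁ × ω₂|`). -/
def geoRot (ω₁ ω₂ : V3) (v : V3) : V3 :=
  rodriguesR ((norm3 (crossR ω₁ ω₂))⁻¹ • crossR ω₁ ω₂) (dotR ω₁ ω₂) (norm3 (crossR ω₁ ω₂)) v

/-- The rotation `R_{ω₁ ↦ ω₂}` extended complex-linearly to `ℂ³`. -/
def geoRotC (ω₁ ω₂ : V3) (v : C3) : C3 :=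
  rodriguesC (toC ((norm3 (crossR ω₁ ω₂))⁻¹ • crossR ω₁ ω₂)) ((dotR ω₁ ω₂ : ℝ) : ℂ)
    ((norm3 (crossR ω₁ ω₂) : ℝ) : ℂ) v

/-- Rotation around the unit axis `a` by the angle `α`, extended complex-linearly to `ℂ³`. -/
def axisRotC (a : V3) (α : ℝ) (v : C3) : C3 :=
  rodriguesC (toC a) ((Real.cos α : ℝ) : ℂ) ((Real.sin α : ℝ) : ℂ) v

/-- `e∥(n) = e⊥ × (n/|n|)`. -/
def ePar (ePerp : V3) (n : V3) : V3 := crossR ePerp ((norm3 n)⁻¹ • n)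

/-- Partial derivative of a real-valued function on `ℝ³`. -/
def pderivR (f : V3 → ℝ) (i : Fin 3) (x : V3) : ℝ := fderiv ℝ f x (Pi.single i 1)

/-- Partial derivative of a complex-valued function on `ℝ³`. -/
def pderivC (f : V3 → ℂ) (i : Fin 3) (x : V3) : ℂ := fderiv ℝ f x (Pi.single i 1)

/-- Curl of a real vector field on `ℝ³`. -/
def curlR (u : V3 → V3) (x : V3) : V3 :=
  ![pderivR (fun y => u y 2) 1 x - pderivR (fun y => u y 1) 2 x,
    pderivR (fun y => u y 0) 2 x - pderivR (fun y => u y 2) 0 x,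
    pderivR (fun y => u y 1) 0 x - pderivR (fun y => u y 0) 1 x]

/-- Curl of a complex vector field on `ℝ³`. -/
def curlC (u : V3 → C3) (x : V3) : C3 :=
  ![pderivC (fun y => u y 2) 1 x - pderivC (fun y => u y 1) 2 x,
    pderivC (fun y => u y 0) 2 x - pderivC (fun y => u y 2) 0 x,
    pderivC (fun y => u y 1) 0 x - pderivC (fun y => u y 0) 1 x]

/-- Real and imaginary parts of a complex vector, as real vectors. -/
def reV (u : C3) : V3 := fun i => (u i).re
def imV (u : C3) : V3 := fun i => (u i).im


/-- Matrix of the map `v ↦ i (n × v)` on `ℂ³`. -/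
def Mmat (n : V3) : Matrix (Fin 3) (Fin 3) ℂ :=
  Complex.I • Matrix.of ![![0, -(n 2 : ℂ), (n 1 : ℂ)], ![(n 2 : ℂ), 0, -(n 0 : ℂ)],
    ![-(n 1 : ℂ), (n 0 : ℂ), 0]]

lemma Mmat_mulVec (n : V3) (v : C3) :
    (Mmat n).mulVec v = Complex.I • crossC (toC n) v := by
  funext i
  fin_cases i <;>
    simp [Mmat, Matrix.mulVec, dotProduct, Fin.sum_univ_three, crossC, toC] <;> ring

set_option maxHeartbeats 1000000 in
lemma key_commute (n : V3) (hN : ((dotR n n : ℝ) : ℂ) ≠ 0) (v : C3) :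
    projC n (crossC (toC ![0,0,1]) (projC n (Complex.I • crossC (toC n) v)))
      = Complex.I • crossC (toC n) (projC n (crossC (toC ![0,0,1]) (projC n v))) := by
  funext i
  have hd : dotR n n = n 0 * n 0 + n 1 * n 1 + n 2 * n 2 := by
    simp [dotR, Fin.sum_univ_three]
  have hN' : ((n 0 : ℂ))^2 + ((n 1 : ℂ))^2 + ((n 2 : ℂ))^2 ≠ 0 := by
    intro h; apply hN; rw [hd]; push_cast; linear_combination h
  have hD : (((n 0 : ℂ))^2 + ((n 1 : ℂ))^2 + ((n 2 : ℂ))^2) *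
      (((n 0 : ℂ))^2 + ((n 1 : ℂ))^2 + ((n 2 : ℂ))^2)⁻¹ = 1 := mul_inv_cancel₀ hN'
  fin_cases i <;>
    simp [projC, crossC, toC, dotC, Fin.sum_univ_three, hd, div_eq_mul_inv]
  · linear_combination (-(n 0 : ℂ) * Complex.I * v 2) * hD
  · linear_combination (-(n 1 : ℂ) * Complex.I * v 2) * hD
  · linear_combination (Complex.I * ((n 0 : ℂ) * v 0 + (n 1 : ℂ) * v 1)) * hD

/-- `J_n` commutes with `v ↦ i(n × v)` on `{v : n · v = 0}`; consequently
`exp(−Ω t J_n)` maps positive (resp. negative) Beltrami vectors at `n` to positive (resp.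
negative) Beltrami vectors at `n`. -/
theorem coriolis_preserves_beltrami
    (n : V3) (hn : n ≠ 0) (J : Matrix (Fin 3) (Fin 3) ℂ)
    (hJ : ∀ v : C3, J.mulVec v = projC n (crossC (toC ![0, 0, 1]) (projC n v))) :
    (∀ v : C3, dotC (toC n) v = 0 →
      J.mulVec (Complex.I • crossC (toC n) v) = Complex.I • crossC (toC n) (J.mulVec v)) ∧
    ∀ σ : ℝ, (σ = norm3 n ∨ σ = -norm3 n) →
      ∀ b : C3, b ≠ 0 → Complex.I • crossC (toC n) b = ((σ : ℝ) : ℂ) • b →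
        ∀ t Ω : ℝ,
          (NormedSpace.exp ((-(Ω * t) : ℂ) • J)).mulVec b ≠ 0 ∧
          Complex.I • crossC (toC n) ((NormedSpace.exp ((-(Ω * t) : ℂ) • J)).mulVec b)
            = ((σ : ℝ) : ℂ) • (NormedSpace.exp ((-(Ω * t) : ℂ) • J)).mulVec b := by
  have hd : dotR n n = n 0 * n 0 + n 1 * n 1 + n 2 * n 2 := by
    simp [dotR, Fin.sum_univ_three]
  obtain ⟨i, hi⟩ := Function.ne_iff.mp hn
  have hpos : 0 < dotR n n := by
    have h1 : 0 < n i * n i := mul_self_pos.mpr hi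
    have h2 : n i * n i ≤ dotR n n :=
      Finset.single_le_sum (fun j _ => mul_self_nonneg (n j)) (Finset.mem_univ i)
    linarith
  have hNC : ((dotR n n : ℝ) : ℂ) ≠ 0 := by
    exact_mod_cast ne_of_gt hpos
  have hcomm : Mmat n * J = J * Mmat n := by
    have h : ∀ v : C3, (Mmat n * J).mulVec v = (J * Mmat n).mulVec v := by
      intro v
      rw [← Matrix.mulVec_mulVec, ← Matrix.mulVec_mulVec, hJ, Mmat_mulVec, Mmat_mulVec, hJ]
      exact (key_commute n hNC v).symm
    ext i j
    have := congrFun (h (Pi.single j 1)) i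
    simpa [Matrix.mulVec_single] using this
  constructor
  · intro v _
    rw [← Mmat_mulVec, ← Mmat_mulVec, Matrix.mulVec_mulVec, Matrix.mulVec_mulVec, hcomm]
  · intro σ _ b hb hbelt t Ω
    set E := NormedSpace.exp ((-(Ω * t) : ℂ) • J) with hE
    have hc0 : Commute (Mmat n) J := hcomm
    have hc : Commute (Mmat n) ((-(Ω * t) : ℂ) • J) := hc0.smul_right _
    have hcE : Mmat n * E = E * Mmat n := (hc.exp_right).eq
    have heig : Complex.I • crossC (toC n) (E.mulVec b) = ((σ : ℝ) : ℂ) • E.mulVec b := by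
      rw [← Mmat_mulVec, Matrix.mulVec_mulVec, hcE, ← Matrix.mulVec_mulVec, Mmat_mulVec,
        hbelt, Matrix.mulVec_smul]
    refine ⟨?_, heig⟩
    intro h0
    apply hb
    obtain ⟨u, hu⟩ := Matrix.isUnit_exp ((-(Ω * t) : ℂ) • J)
    have h1 : ((↑u⁻¹ : Matrix (Fin 3) (Fin 3) ℂ) * E).mulVec b = b := by
      rw [hE, ← hu, ← Units.val_mul, inv_mul_cancel, Units.val_one, Matrix.one_mulVec]
    rw [← h1, ← Matrix.mulVec_mulVec, h0, Matrix.mulVec_zero]
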